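/- Let τ > 0 and let (W(t), M(t)) be a solution of the synaptic ODE with timescale τ and initial condition (W₀, M₀) ∈ D, and let m = σ_min(M₀) be the smallest eigenvalue of M₀. Then for all t ≥ 0, ‖W(t)‖ ≤ ‖W₀‖ · exp[ 2·( (√k / m)·‖A‖·e^{t/τ} + 1 )·t ]. -/

import Mathlib

open Matrix Filter
open scoped Matrix

attribute [local instance] Matrix.frobeniusNormedAddCommGroup Matrix.frobeniusNormedSpace

/-- A solution of the synaptic ODE with timescale `τ` on `[0, ∞)`:
a continuously differentiable curve `t ↦ (W t, M t)` staying in the domain `D`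
(i.e. `M t` symmetric positive definite) satisfying
`(1/2)·dW/dt = M⁻¹WA − W` and `τ·dM/dt = M⁻¹WAWᵀM⁻¹ − M`. -/
def IsSynSol {k n : ℕ} (A : Matrix (Fin n) (Fin n) ℝ) (τ : ℝ)
    (W : ℝ → Matrix (Fin k) (Fin n) ℝ) (M : ℝ → Matrix (Fin k) (Fin k) ℝ) : Prop :=
  ∀ t : ℝ, 0 ≤ t →
    (M t).PosDef ∧
    HasDerivWithinAt W ((2 : ℝ) • ((M t)⁻¹ * W t * A - W t)) (Set.Ici 0) t ∧
    HasDerivWithinAt M (τ⁻¹ • ((M t)⁻¹ * W t * A * (W t)ᵀ * (M t)⁻¹ - M t)) (Set.Ici 0) t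

lemma rayleigh_lower {k : ℕ} {M₀ : Matrix (Fin k) (Fin k) ℝ} (hH : M₀.IsHermitian)
    {c : ℝ} (hc : ∀ i, c ≤ hH.eigenvalues i) (v : Fin k → ℝ) :
    c * (v ⬝ᵥ v) ≤ v ⬝ᵥ M₀ *ᵥ v := by
  classical
  set U : Matrix (Fin k) (Fin k) ℝ := (hH.eigenvectorUnitary : Matrix (Fin k) (Fin k) ℝ)
  have hUU : U * star U = 1 := (Matrix.mem_unitaryGroup_iff).mp hH.eigenvectorUnitary.2
  have h1 : M₀ - c • (1 : Matrix (Fin k) (Fin k) ℝ)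
      = U * (diagonal (fun i => hH.eigenvalues i - c)) * star U := by
    have hs : (c • (1 : Matrix (Fin k) (Fin k) ℝ)) = U * (c • 1) * star U := by
      rw [mul_smul_comm, smul_mul_assoc, mul_one, hUU]
    calc M₀ - c • (1 : Matrix (Fin k) (Fin k) ℝ)
        = U * (diagonal (RCLike.ofReal ∘ hH.eigenvalues)) * star U - U * (c • 1) * star U := by
          rw [← hs]
          conv_lhs => rw [hH.spectral_theorem, Unitary.conjStarAlgAut_apply]
      _ = U * (diagonal (RCLike.ofReal ∘ hH.eigenvalues) - c • 1) * star U := by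
          rw [mul_sub, sub_mul]
      _ = U * (diagonal (fun i => hH.eigenvalues i - c)) * star U := by
          rw [smul_one_eq_diagonal, ← diagonal_sub]
          rfl
  have hps : (M₀ - c • (1 : Matrix (Fin k) (Fin k) ℝ)).PosSemidef := by
    rw [h1]
    have hd : PosSemidef (diagonal (fun i => hH.eigenvalues i - c)) :=
      posSemidef_diagonal_iff.mpr fun i => sub_nonneg.2 (hc i)
    simpa [Matrix.star_eq_conjTranspose] using hd.mul_mul_conjTranspose_same U
  have := hps.dotProduct_mulVec_nonneg v
  simp only [star_trivial, sub_mulVec, dotProduct_sub, smul_mulVec, one_mulVec,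
    dotProduct_smul, smul_eq_mul] at this
  linarith

lemma inv_frob_norm_le {k : ℕ} {M : Matrix (Fin k) (Fin k) ℝ} (hM : M.PosDef)
    {c : ℝ} (hc : 0 < c) (h : ∀ v : Fin k → ℝ, c * (v ⬝ᵥ v) ≤ v ⬝ᵥ M *ᵥ v) :
    ‖M⁻¹‖ ≤ Real.sqrt k / c := by
  classical
  have hdet : IsUnit M.det := isUnit_iff_ne_zero.mpr hM.det_pos.ne'
  have key : ∀ x : Fin k → ℝ, (M⁻¹ *ᵥ x) ⬝ᵥ (M⁻¹ *ᵥ x) ≤ (x ⬝ᵥ x) / c ^ 2 := by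
    intro x
    set y := M⁻¹ *ᵥ x with hy
    have hMy : M *ᵥ y = x := by
      rw [hy, mulVec_mulVec, Matrix.mul_nonsing_inv _ hdet, one_mulVec]
    have h1 : c * (y ⬝ᵥ y) ≤ y ⬝ᵥ x := by
      have := h y; rwa [hMy] at this
    have hyy : (0:ℝ) ≤ y ⬝ᵥ y := Finset.sum_nonneg fun i _ => mul_self_nonneg _
    have hxx : (0:ℝ) ≤ x ⬝ᵥ x := Finset.sum_nonneg fun i _ => mul_self_nonneg _
    have h2 : (y ⬝ᵥ x) ^ 2 ≤ (y ⬝ᵥ y) * (x ⬝ᵥ x) := by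
      have := Finset.sum_mul_sq_le_sq_mul_sq Finset.univ y x
      simpa [dotProduct, sq] using this
    have h3 : (c * (y ⬝ᵥ y)) ^ 2 ≤ (y ⬝ᵥ x) ^ 2 :=
      pow_le_pow_left₀ (mul_nonneg hc.le hyy) h1 2
    have h4 : c ^ 2 * ((y ⬝ᵥ y) * (y ⬝ᵥ y)) ≤ (y ⬝ᵥ y) * (x ⬝ᵥ x) := by
      calc c ^ 2 * ((y ⬝ᵥ y) * (y ⬝ᵥ y)) = (c * (y ⬝ᵥ y)) ^ 2 := by ring
        _ ≤ (y ⬝ᵥ x) ^ 2 := h3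
        _ ≤ (y ⬝ᵥ y) * (x ⬝ᵥ x) := h2
    rcases eq_or_lt_of_le hyy with h0 | h0
    · rw [← h0]
      positivity
    · rw [le_div_iff₀ (by positivity)]
      nlinarith
  have hsum : ∑ i, ∑ j, (M⁻¹ i j) ^ 2 ≤ (k : ℝ) / c ^ 2 := by
    rw [Finset.sum_comm]
    have hcol : ∀ j : Fin k, ∑ i, (M⁻¹ i j) ^ 2 ≤ 1 / c ^ 2 := by
      intro j
      have := key (Pi.single j 1)
      have hy : (M⁻¹ *ᵥ Pi.single j 1) = fun i => M⁻¹ i j := by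
        ext i
        simp [mulVec_single]
      have hx : (Pi.single j 1 : Fin k → ℝ) ⬝ᵥ (Pi.single j 1) = 1 := by
        simp [dotProduct, Pi.single_apply]
      rw [hy, hx] at this
      simpa [dotProduct, sq] using this
    calc ∑ j, ∑ i, (M⁻¹ i j) ^ 2 ≤ ∑ _j : Fin k, 1 / c ^ 2 :=
          Finset.sum_le_sum fun j _ => hcol j
      _ = (k : ℝ) / c ^ 2 := by simp [Finset.sum_const]; ring
  have hnorm : ‖M⁻¹‖ = Real.sqrt (∑ i, ∑ j, (M⁻¹ i j) ^ 2) := by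
    rw [frobenius_norm_def, Real.sqrt_eq_rpow]
    congr 1
    refine Finset.sum_congr rfl fun i _ => Finset.sum_congr rfl fun j _ => ?_
    rw [Real.rpow_two, Real.norm_eq_abs, sq_abs, sq]
  rw [hnorm]
  calc Real.sqrt (∑ i, ∑ j, (M⁻¹ i j) ^ 2) ≤ Real.sqrt ((k : ℝ) / c ^ 2) :=
        Real.sqrt_le_sqrt hsum
    _ = Real.sqrt k / c := by
        rw [Real.sqrt_div (Nat.cast_nonneg k), Real.sqrt_sq hc.le]

noncomputable def quadL {k : ℕ} (v : Fin k → ℝ) :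
    Matrix (Fin k) (Fin k) ℝ →L[ℝ] ℝ :=
  LinearMap.toContinuousLinearMap
  { toFun := fun B => v ⬝ᵥ B *ᵥ v
    map_add' := fun B C => by simp [add_mulVec, dotProduct_add]
    map_smul' := fun c B => by simp [smul_mulVec, dotProduct_smul] }

@[simp] lemma quadL_apply {k : ℕ} (v : Fin k → ℝ) (B : Matrix (Fin k) (Fin k) ℝ) :
    quadL v B = v ⬝ᵥ B *ᵥ v := rfl

lemma quad_deriv {k : ℕ} (v : Fin k → ℝ) {M : ℝ → Matrix (Fin k) (Fin k) ℝ}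
    {M' : Matrix (Fin k) (Fin k) ℝ} {s : Set ℝ} {t : ℝ}
    (hM : HasDerivWithinAt M M' s t) :
    HasDerivWithinAt (fun t => v ⬝ᵥ (M t) *ᵥ v) (v ⬝ᵥ M' *ᵥ v) s t := by
  have := ((quadL v).hasFDerivAt (x := M t)).comp_hasDerivWithinAt t hM
  exact this

lemma quad_P_nonneg {k n : ℕ} {A : Matrix (Fin n) (Fin n) ℝ} (hA : A.PosDef)
    {Mt : Matrix (Fin k) (Fin k) ℝ} (hMt : Mt.PosDef) (Wt : Matrix (Fin k) (Fin n) ℝ)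
    (v : Fin k → ℝ) :
    0 ≤ v ⬝ᵥ (Mt⁻¹ * Wt * A * Wtᵀ * Mt⁻¹) *ᵥ v := by
  have hMinvH : (Mt⁻¹).IsHermitian := hMt.isHermitian.inv
  set B := Mt⁻¹ * Wt with hB
  have hBH : Bᴴ = Wtᵀ * Mt⁻¹ := by
    rw [hB, conjTranspose_mul, hMinvH.eq, conjTranspose_eq_transpose_of_trivial]
  have hP : (B * A * Bᴴ).PosSemidef := hA.posSemidef.mul_mul_conjTranspose_same B
  have heq : B * A * Bᴴ = Mt⁻¹ * Wt * A * Wtᵀ * Mt⁻¹ := by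
    rw [hBH, hB, Matrix.mul_assoc (Mt⁻¹ * Wt * A)]
  rw [← heq]
  simpa using hP.dotProduct_mulVec_nonneg v

lemma quadform_lower {k n : ℕ} {A : Matrix (Fin n) (Fin n) ℝ} (hA : A.PosDef)
    {τ : ℝ} (hτ : 0 < τ) {W : ℝ → Matrix (Fin k) (Fin n) ℝ}
    {M : ℝ → Matrix (Fin k) (Fin k) ℝ} (hsol : IsSynSol A τ W M) (v : Fin k → ℝ) :
    ∀ t : ℝ, 0 ≤ t → v ⬝ᵥ (M 0) *ᵥ v ≤ Real.exp (t / τ) * (v ⬝ᵥ (M t) *ᵥ v) := by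
  set g : ℝ → ℝ := fun t => Real.exp (t / τ) * (v ⬝ᵥ (M t) *ᵥ v) with hg
  have hmono : MonotoneOn g (Set.Ici 0) := by
    apply monotoneOn_of_hasDerivWithinAt_nonneg (convex_Ici 0)
      (f' := fun t => Real.exp (t / τ) * τ⁻¹ *
        (v ⬝ᵥ ((M t)⁻¹ * W t * A * (W t)ᵀ * (M t)⁻¹) *ᵥ v))
    · apply ContinuousOn.mul
      · exact (Real.continuous_exp.comp (continuous_id.div_const τ)).continuousOn
      · intro t ht
        exact (quad_deriv v ((hsol t ht).2.2)).continuousWithinAt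
    · intro t ht
      rw [interior_Ici] at ht ⊢
      have hq : HasDerivWithinAt (fun t => v ⬝ᵥ (M t) *ᵥ v)
          (v ⬝ᵥ (τ⁻¹ • ((M t)⁻¹ * W t * A * (W t)ᵀ * (M t)⁻¹ - M t)) *ᵥ v) (Set.Ioi 0) t :=
        (quad_deriv v ((hsol t ht.le).2.2)).mono Set.Ioi_subset_Ici_self
      have hexp : HasDerivWithinAt (fun t => Real.exp (t / τ))
          (Real.exp (t / τ) * (1 / τ)) (Set.Ioi 0) t :=
        by have := (Real.hasDerivAt_exp (t / τ)).comp t ((hasDerivAt_id t).div_const τ); exact this.hasDerivWithinAt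
      have := hexp.mul hq
      refine this.congr_deriv ?_
      simp only [smul_mulVec, dotProduct_smul, sub_mulVec, dotProduct_sub, smul_eq_mul]
      ring
    · intro t ht
      rw [interior_Ici] at ht
      have h0 := quad_P_nonneg hA (hsol t ht.le).1 (W t) v
      positivity
  intro t ht
  have := hmono (Set.self_mem_Ici) ht ht
  simpa [hg] using this

/-- Gronwall bound on the feedforward weights: along any solution with timescale `τ > 0`,
with `m = σ_min(M₀)` the smallest eigenvalue of `M₀`, for all `t ≥ 0`,
`‖W(t)‖ ≤ ‖W₀‖·exp[2·((√k/m)·‖A‖·e^{t/τ} + 1)·t]` (Frobenius norms). -/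
theorem W_growth_bound {k n : ℕ} (hk : 0 < k) (hkn : k < n)
    (A : Matrix (Fin n) (Fin n) ℝ) (hA : A.PosDef)
    (τ : ℝ) (hτ : 0 < τ)
    (W₀ : Matrix (Fin k) (Fin n) ℝ) (M₀ : Matrix (Fin k) (Fin k) ℝ) (hM₀ : M₀.PosDef)
    (W : ℝ → Matrix (Fin k) (Fin n) ℝ) (M : ℝ → Matrix (Fin k) (Fin k) ℝ)
    (hsol : IsSynSol A τ W M) (hW0 : W 0 = W₀) (hM0 : M 0 = M₀)
    (m : ℝ) (hm : m = ⨅ i : Fin k, hM₀.isHermitian.eigenvalues i) :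
    ∀ t : ℝ, 0 ≤ t →
      ‖W t‖ ≤ ‖W₀‖ * Real.exp (2 * ((Real.sqrt k / m) * ‖A‖ * Real.exp (t / τ) + 1) * t) := by
  intro T hT
  have hmle : ∀ i, m ≤ hM₀.isHermitian.eigenvalues i := fun i =>
    hm ▸ ciInf_le (Set.Finite.bddBelow (Set.finite_range _)) i
  have hmpos : 0 < m := by
    have hne : Nonempty (Fin k) := ⟨⟨0, hk⟩⟩
    obtain ⟨i₀, hi₀⟩ := Finite.exists_min hM₀.isHermitian.eigenvalues
    have h1 : hM₀.isHermitian.eigenvalues i₀ ≤ m := hm ▸ le_ciInf hi₀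
    exact lt_of_lt_of_le (hM₀.eigenvalues_pos i₀) h1
  have hquad : ∀ t : ℝ, 0 ≤ t → ∀ v : Fin k → ℝ,
      (m * Real.exp (-(t / τ))) * (v ⬝ᵥ v) ≤ v ⬝ᵥ (M t) *ᵥ v := by
    intro t ht v
    have h1 := quadform_lower hA hτ hsol v t ht
    have h2 : m * (v ⬝ᵥ v) ≤ v ⬝ᵥ (M 0) *ᵥ v := by
      rw [hM0]; exact rayleigh_lower hM₀.isHermitian hmle v
    have h3 : m * (v ⬝ᵥ v) ≤ Real.exp (t / τ) * (v ⬝ᵥ (M t) *ᵥ v) := le_trans h2 h1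
    have hepos : (0:ℝ) < Real.exp (t / τ) := Real.exp_pos _
    rw [Real.exp_neg]
    rw [mul_comm m (Real.exp (t / τ))⁻¹, mul_assoc,
      inv_mul_le_iff₀ hepos]
    exact h3
  have hMinv : ∀ t ∈ Set.Icc (0:ℝ) T,
      ‖(M t)⁻¹‖ ≤ Real.sqrt k / m * Real.exp (T / τ) := by
    intro t ht
    have hc : 0 < m * Real.exp (-(t / τ)) := by positivity
    have hb := inv_frob_norm_le (hsol t ht.1).1 hc (fun v => hquad t ht.1 v)
    calc ‖(M t)⁻¹‖ ≤ Real.sqrt k / (m * Real.exp (-(t / τ))) := hb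
      _ = Real.sqrt k / m * Real.exp (t / τ) := by
          rw [Real.exp_neg]
          field_simp
      _ ≤ Real.sqrt k / m * Real.exp (T / τ) := by
          have : Real.exp (t / τ) ≤ Real.exp (T / τ) :=
            Real.exp_le_exp.2 (by gcongr; exact ht.2)
          have hnn : 0 ≤ Real.sqrt k / m := by positivity
          exact mul_le_mul_of_nonneg_left this hnn
  set K : ℝ := 2 * (Real.sqrt k / m * ‖A‖ * Real.exp (T / τ) + 1) with hK
  have hcont : ContinuousOn W (Set.Icc 0 T) := fun t ht =>
    ((hsol t ht.1).2.1.continuousWithinAt).mono Set.Icc_subset_Ici_self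
  have hderiv : ∀ x ∈ Set.Ico 0 T,
      HasDerivWithinAt W ((2 : ℝ) • ((M x)⁻¹ * W x * A - W x)) (Set.Ici x) x :=
    fun x hx => ((hsol x hx.1).2.1).mono (Set.Ici_subset_Ici.mpr hx.1)
  have hbound : ∀ x ∈ Set.Ico 0 T,
      ‖(2 : ℝ) • ((M x)⁻¹ * W x * A - W x)‖ ≤ K * ‖W x‖ + 0 := by
    intro x hx
    have hx' : x ∈ Set.Icc (0:ℝ) T := ⟨hx.1, hx.2.le⟩
    have hm1 : ‖(M x)⁻¹ * W x * A‖ ≤ ‖(M x)⁻¹‖ * ‖W x‖ * ‖A‖ := by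
      calc ‖(M x)⁻¹ * W x * A‖ ≤ ‖(M x)⁻¹ * W x‖ * ‖A‖ :=
            frobenius_norm_mul _ _
        _ ≤ ‖(M x)⁻¹‖ * ‖W x‖ * ‖A‖ :=
            mul_le_mul_of_nonneg_right (frobenius_norm_mul _ _) (norm_nonneg _)
    have hm2 : ‖(M x)⁻¹‖ ≤ Real.sqrt k / m * Real.exp (T / τ) := hMinv x hx'
    have hA0 : (0:ℝ) ≤ ‖A‖ := norm_nonneg _
    have hW0' : (0:ℝ) ≤ ‖W x‖ := norm_nonneg _
    have hstep : ‖(M x)⁻¹ * W x * A‖ ≤ (Real.sqrt k / m * Real.exp (T / τ)) * ‖A‖ * ‖W x‖ := by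
      calc ‖(M x)⁻¹ * W x * A‖ ≤ ‖(M x)⁻¹‖ * ‖W x‖ * ‖A‖ := hm1
        _ ≤ (Real.sqrt k / m * Real.exp (T / τ)) * ‖W x‖ * ‖A‖ := by
            exact mul_le_mul_of_nonneg_right
              (mul_le_mul_of_nonneg_right hm2 hW0') hA0
        _ = (Real.sqrt k / m * Real.exp (T / τ)) * ‖A‖ * ‖W x‖ := by ring
    calc ‖(2 : ℝ) • ((M x)⁻¹ * W x * A - W x)‖
        = 2 * ‖(M x)⁻¹ * W x * A - W x‖ := by
          rw [norm_smul]; simp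
      _ ≤ 2 * (‖(M x)⁻¹ * W x * A‖ + ‖W x‖) := by
          have := norm_sub_le ((M x)⁻¹ * W x * A) (W x)
          linarith
      _ ≤ 2 * ((Real.sqrt k / m * Real.exp (T / τ)) * ‖A‖ * ‖W x‖ + ‖W x‖) := by
          linarith
      _ = K * ‖W x‖ + 0 := by rw [hK]; ring
  have ha : ‖W 0‖ ≤ ‖W₀‖ := by rw [hW0]
  have hfin := norm_le_gronwallBound_of_norm_deriv_right_le hcont hderiv ha hbound T
    (Set.right_mem_Icc.mpr hT)
  rw [sub_zero, gronwallBound_ε0] at hfin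
  calc ‖W T‖ ≤ ‖W₀‖ * Real.exp (K * T) := hfin
    _ = ‖W₀‖ * Real.exp (2 * (Real.sqrt ↑k / m * ‖A‖ * Real.exp (T / τ) + 1) * T) := by
        rw [hK]
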